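/- Let λ ≠ 0 be real, let a, b : ℤ → [0,∞) be finitely supported, and define f(x) := e^{λ{x}} a(⌊x⌋), g(y) := e^{λ{y}} b(⌊y⌋). Then ∫_ℝ (f ⊛ g) ≤ ((e^{λ} − 1)/λ) · ∑_{n ∈ ℤ} max((a ⊛ b)(n), e^{λ} · (a ⊛ b)(n−1)). -/

import Mathlib

open MeasureTheory

theorem lintegral_maxconv_le
    (lam : ℝ) (hlam : lam ≠ 0)
    (a b : ℤ → ℝ) (ha : ∀ n, 0 ≤ a n) (hb : ∀ n, 0 ≤ b n)
    (hsa : (Function.support a).Finite) (hsb : (Function.support b).Finite)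
    (f g : ℝ → ℝ)
    (hf : ∀ x, f x = Real.exp (lam * Int.fract x) * a ⌊x⌋)
    (hg : ∀ y, g y = Real.exp (lam * Int.fract y) * b ⌊y⌋) :
    (∫⁻ x : ℝ, ENNReal.ofReal (⨆ y : ℝ, f (x - y) * g y)) ≤
      ENNReal.ofReal (((Real.exp lam - 1) / lam) *
        ∑' n : ℤ, max (⨆ m : ℤ, a (n - m) * b m)
          (Real.exp lam * ⨆ m : ℤ, a (n - 1 - m) * b m)) := by
  classical
  set A : ℤ → ℝ := fun n => ⨆ m : ℤ, a (n - m) * b m with hAdef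
  set M : ℤ → ℝ := fun n => max (A n) (Real.exp lam * A (n - 1)) with hMdef
  -- bounds on a and b
  obtain ⟨Ca, hCa0, hCa⟩ : ∃ C, 0 ≤ C ∧ ∀ n, a n ≤ C := by
    obtain ⟨C, hC⟩ := (hsa.image a).bddAbove
    refine ⟨max C 0, le_max_right _ _, fun n => ?_⟩
    by_cases h : a n = 0
    · simp [h]
    · exact le_trans (hC (Set.mem_image_of_mem a h)) (le_max_left _ _)
  obtain ⟨Cb, hCb0, hCb⟩ : ∃ C, 0 ≤ C ∧ ∀ n, b n ≤ C := by
    obtain ⟨C, hC⟩ := (hsb.image b).bddAbove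
    refine ⟨max C 0, le_max_right _ _, fun n => ?_⟩
    by_cases h : b n = 0
    · simp [h]
    · exact le_trans (hC (Set.mem_image_of_mem b h)) (le_max_left _ _)
  have hbdd : ∀ n : ℤ, BddAbove (Set.range fun m : ℤ => a (n - m) * b m) := by
    intro n
    refine ⟨Ca * Cb, ?_⟩
    rintro _ ⟨m, rfl⟩
    exact mul_le_mul (hCa _) (hCb _) (hb _) hCa0
  have le_A : ∀ n m : ℤ, a (n - m) * b m ≤ A n := fun n m => le_ciSup (hbdd n) m
  have A_nonneg : ∀ n, 0 ≤ A n := fun n =>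
    Real.iSup_nonneg fun m => mul_nonneg (ha _) (hb _)
  have M_nonneg : ∀ n, 0 ≤ M n := fun n => le_trans (A_nonneg n) (le_max_left _ _)
  -- finite support of A and M
  have hAfin : (Function.support A).Finite := by
    refine Set.Finite.subset (hsa.add hsb) ?_
    intro n hn
    have hex : ∃ m, a (n - m) * b m ≠ 0 := by
      by_contra h
      push_neg at h
      apply hn
      have h1 : A n ≤ 0 := Real.iSup_le (fun m => le_of_eq (h m)) le_rfl
      exact le_antisymm h1 (A_nonneg n)
    obtain ⟨m, hm⟩ := hex
    rw [mul_ne_zero_iff] at hm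
    exact ⟨n - m, hm.1, m, hm.2, by ring⟩
  have hMfin : (Function.support M).Finite := by
    refine Set.Finite.subset (hAfin.union (hAfin.image (fun n => n + 1))) ?_
    intro n hn
    by_cases h1 : A n = 0
    · have h2 : A (n - 1) ≠ 0 := by
        intro h2
        apply hn
        simp [hMdef, h1, h2]
      exact Or.inr ⟨n - 1, h2, by ring⟩
    · exact Or.inl h1
  have hMs : Summable M := summable_of_finite_support hMfin
  have hexp_nonneg : ∀ t : ℝ, 0 ≤ Real.exp t := fun t => (Real.exp_pos t).le
  -- pointwise bound
  have key : ∀ x : ℝ, (⨆ y : ℝ, f (x - y) * g y) ≤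
      Real.exp (lam * Int.fract x) * M ⌊x⌋ := by
    intro x
    refine Real.iSup_le (fun y => ?_) (mul_nonneg (hexp_nonneg _) (M_nonneg _))
    rw [hf, hg]
    set s : ℝ := Int.fract (x - y) + Int.fract y with hs
    have hx : x = (⌊x - y⌋ : ℝ) + (⌊y⌋ : ℝ) + s := by
      have h1 : (⌊x - y⌋ : ℝ) + Int.fract (x - y) = x - y := Int.floor_add_fract _
      have h2 : (⌊y⌋ : ℝ) + Int.fract y = y := Int.floor_add_fract _
      simp only [hs]
      linarith
    have hs0 : 0 ≤ s := add_nonneg (Int.fract_nonneg _) (Int.fract_nonneg _)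
    have hs2 : s < 2 := by
      have := Int.fract_lt_one (x - y)
      have := Int.fract_lt_one y
      simp only [hs]; linarith
    by_cases hcase : s < 1
    · have hfl : ⌊x⌋ = ⌊x - y⌋ + ⌊y⌋ := by
        rw [Int.floor_eq_iff]
        push_cast
        constructor <;> linarith
      have hfr : Int.fract x = s := by
        rw [← Int.self_sub_floor, hfl]
        push_cast
        linarith
      have e1 : Real.exp (lam * Int.fract (x - y)) * Real.exp (lam * Int.fract y) =
          Real.exp (lam * Int.fract x) := by
        rw [← Real.exp_add]
        congr 1
        rw [hfr]
        simp only [hs]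
        ring
      have heq : Real.exp (lam * Int.fract (x - y)) * a ⌊x - y⌋ *
          (Real.exp (lam * Int.fract y) * b ⌊y⌋) =
          Real.exp (lam * Int.fract x) * (a (⌊x⌋ - ⌊y⌋) * b ⌊y⌋) := by
        rw [show ⌊x⌋ - ⌊y⌋ = ⌊x - y⌋ by omega]
        linear_combination (a ⌊x - y⌋ * b ⌊y⌋) * e1
      rw [heq]
      exact mul_le_mul_of_nonneg_left
        (le_trans (le_A _ _) (le_max_left _ _)) (hexp_nonneg _)
    · push_neg at hcase
      have hfl : ⌊x⌋ = ⌊x - y⌋ + ⌊y⌋ + 1 := by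
        rw [Int.floor_eq_iff]
        push_cast
        constructor <;> linarith
      have hfr : Int.fract x = s - 1 := by
        rw [← Int.self_sub_floor, hfl]
        push_cast
        linarith
      have e1 : Real.exp (lam * Int.fract (x - y)) * Real.exp (lam * Int.fract y) =
          Real.exp (lam * Int.fract x) * Real.exp lam := by
        rw [← Real.exp_add, ← Real.exp_add]
        congr 1
        rw [hfr]
        simp only [hs]
        ring
      have heq : Real.exp (lam * Int.fract (x - y)) * a ⌊x - y⌋ *
          (Real.exp (lam * Int.fract y) * b ⌊y⌋) =
          Real.exp (lam * Int.fract x) *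
            (Real.exp lam * (a (⌊x⌋ - 1 - ⌊y⌋) * b ⌊y⌋)) := by
        rw [show ⌊x⌋ - 1 - ⌊y⌋ = ⌊x - y⌋ by omega]
        linear_combination (a ⌊x - y⌋ * b ⌊y⌋) * e1
      rw [heq]
      refine mul_le_mul_of_nonneg_left ?_ (hexp_nonneg _)
      refine le_trans ?_ (le_max_right (A ⌊x⌋) _)
      exact mul_le_mul_of_nonneg_left (le_A (⌊x⌋ - 1) ⌊y⌋) (hexp_nonneg _)
  -- constant
  set C : ℝ := (Real.exp lam - 1) / lam with hCdef
  have hC0 : 0 ≤ C := by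
    rcases hlam.lt_or_gt with h | h
    · have : Real.exp lam < 1 := Real.exp_lt_one_iff.mpr h
      exact div_nonneg_iff.mpr (Or.inr ⟨by linarith, h.le⟩)
    · have : lam + 1 ≤ Real.exp lam := Real.add_one_le_exp lam
      exact div_nonneg (by linarith) h.le
  -- the exponential integral over one period
  have hIexp : ∀ n : ℤ, (∫⁻ x in Set.Ico (n : ℝ) (n + 1),
      ENNReal.ofReal (Real.exp (lam * (x - n)))) = ENNReal.ofReal C := by
    intro n
    have hcont : Continuous fun x : ℝ => Real.exp (lam * (x - n)) :=
      (Real.continuous_exp.comp ((continuous_const.mul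
        (continuous_id.sub continuous_const))))
    have hint : IntegrableOn (fun x : ℝ => Real.exp (lam * (x - n)))
        (Set.Ico (n : ℝ) (n + 1)) := by
      exact (hcont.integrableOn_Icc).mono_set Set.Ico_subset_Icc_self
    rw [← ofReal_integral_eq_lintegral_ofReal hint
      (Filter.Eventually.of_forall fun x => hexp_nonneg _)]
    congr 1
    have h1 : (∫ x in Set.Ico (n : ℝ) (n + 1), Real.exp (lam * (x - n))) =
        ∫ x in (n : ℝ)..(n + 1), Real.exp (lam * (x - n)) := by
      rw [intervalIntegral.integral_of_le (by linarith),
        integral_Ioc_eq_integral_Ioo, integral_Ico_eq_integral_Ioo]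
    rw [h1]
    have h2 : (∫ x in (n : ℝ)..(n + 1), Real.exp (lam * (x - n))) =
        ∫ x in (0 : ℝ)..1, Real.exp (lam * x) := by
      have := intervalIntegral.integral_comp_sub_right
        (fun x : ℝ => Real.exp (lam * x)) (n : ℝ) (a := (n : ℝ)) (b := (n : ℝ) + 1)
      simpa using this
    rw [h2]
    have h3 : lam * (∫ x in (0 : ℝ)..1, Real.exp (lam * x)) = Real.exp lam - 1 := by
      rw [intervalIntegral.mul_integral_comp_mul_left (f := Real.exp) lam]
      norm_num [integral_exp]
    rw [hCdef, eq_div_iff hlam]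
    linear_combination h3
  -- integral of the majorant over each cell
  have piece : ∀ n : ℤ, (∫⁻ x in Set.Ico (n : ℝ) (n + 1),
      ENNReal.ofReal (Real.exp (lam * Int.fract x) * M ⌊x⌋)) =
      ENNReal.ofReal C * ENNReal.ofReal (M n) := by
    intro n
    have hcongr : ∀ x ∈ Set.Ico (n : ℝ) (n + 1),
        ENNReal.ofReal (Real.exp (lam * Int.fract x) * M ⌊x⌋) =
        ENNReal.ofReal (Real.exp (lam * (x - n))) * ENNReal.ofReal (M n) := by
      intro x hx
      have hfl : ⌊x⌋ = n := by
        rw [Int.floor_eq_iff]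
        exact ⟨hx.1, by exact_mod_cast hx.2⟩
      have hfr : Int.fract x = x - n := by rw [Int.fract, hfl]
      rw [hfl, hfr, ENNReal.ofReal_mul (hexp_nonneg _)]
    rw [setLIntegral_congr_fun measurableSet_Ico hcongr,
      lintegral_mul_const' _ _ ENNReal.ofReal_ne_top, hIexp n]
  -- main computation
  calc (∫⁻ x : ℝ, ENNReal.ofReal (⨆ y : ℝ, f (x - y) * g y))
      ≤ ∫⁻ x : ℝ, ENNReal.ofReal (Real.exp (lam * Int.fract x) * M ⌊x⌋) :=
        lintegral_mono fun x => ENNReal.ofReal_le_ofReal (key x)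
    _ = ∑' n : ℤ, ∫⁻ x in Set.Ico (n : ℝ) (n + 1),
          ENNReal.ofReal (Real.exp (lam * Int.fract x) * M ⌊x⌋) := by
        rw [← setLIntegral_univ, ← iUnion_Ico_intCast (α := ℝ),
          lintegral_iUnion (fun n => measurableSet_Ico)
            (Set.pairwise_disjoint_Ico_intCast ℝ)]
    _ = ∑' n : ℤ, ENNReal.ofReal C * ENNReal.ofReal (M n) := by
        exact tsum_congr piece
    _ = ENNReal.ofReal C * ∑' n : ℤ, ENNReal.ofReal (M n) := ENNReal.tsum_mul_left
    _ = ENNReal.ofReal (C * ∑' n : ℤ, M n) := by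
        rw [ENNReal.ofReal_mul hC0, ENNReal.ofReal_tsum_of_nonneg M_nonneg hMs]
    _ ≤ ENNReal.ofReal (((Real.exp lam - 1) / lam) *
        ∑' n : ℤ, max (⨆ m : ℤ, a (n - m) * b m)
          (Real.exp lam * ⨆ m : ℤ, a (n - 1 - m) * b m)) := le_of_eq rfl
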